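/- Let 𝔽_q be a finite field with q elements, k ≥ 2, n = q^k − 1, and let 𝒞 ⊆ 𝔽_q^n be a dual Hamming code, i.e., the cyclic code generated by g(x) = (x^n−1)/g⊥(x) for a primitive monic irreducible g⊥ of degree k. Fix any linear order on 𝔽_q (used to define cdes). Then every nonzero codeword w ∈ 𝒞 satisfies 2·cdes(w) = (q−1)·q^{k−1}. -/

import Mathlib

/-- The (leftward) cyclic shift on words of length `n`:
`c(w₁,…,wₙ) = (w₂,…,wₙ,w₁)`. -/
def cshift {A : Type*} {n : ℕ} (w : Fin n → A) : Fin n → A :=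
  fun i => w ⟨((i : ℕ) + 1) % n, Nat.mod_lt _ i.pos⟩

/-- The major index of a word: `maj w = Σ_{1 ≤ i ≤ n-1, w_i > w_{i+1}} i`
(here positions are 0-indexed, so position `i : Fin n` is the `(i+1)`-st letter). -/
def majIdx {A : Type*} [LinearOrder A] {n : ℕ} (w : Fin n → A) : ℕ :=
  ∑ i : Fin n,
    if h : (i : ℕ) + 1 < n then (if w ⟨(i : ℕ) + 1, h⟩ < w i then (i : ℕ) + 1 else 0) else 0

/-- The number of cyclic descents of a word, `cdes w = #{i : w_i > w_{i+1}}`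
with indices read cyclically (`w_{n+1} := w_1`). -/
def cdes {A : Type*} [LinearOrder A] {n : ℕ} (w : Fin n → A) : ℕ :=
  (Finset.univ.filter fun i : Fin n =>
    w ⟨((i : ℕ) + 1) % n, Nat.mod_lt _ i.pos⟩ < w i).card

/-- The inversion number of a word: `inv w = #{(i,j) : i < j, w_i > w_j}`. -/
def invNum {A : Type*} [LinearOrder A] {n : ℕ} (w : Fin n → A) : ℕ :=
  (Finset.univ.filter fun p : Fin n × Fin n => p.1 < p.2 ∧ w p.2 < w p.1).card

/-- The Hamming weight of a binary word: the number of ones. -/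
def wt {n : ℕ} (w : Fin n → Bool) : ℕ :=
  (Finset.univ.filter fun i => w i = true).card

/-- The triple `(X, Σ_{x ∈ X} t^{stat x}, C)` exhibits the cyclic sieving phenomenon,
where `C` is the cyclic group of order `n` generated by the cyclic shift `c` acting on `X`:
for every `d`, the number of fixed points of `c^d` on `X` equals the evaluation of
`Σ_{x ∈ X} t^{stat x}` at `t = ζ^d`, with `ζ = exp(2πi/n)`. -/
def exhibitsCSP {A : Type*} [DecidableEq A] {n : ℕ} (X : Finset (Fin n → A))
    (stat : (Fin n → A) → ℕ) : Prop :=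
  ∀ d : ℕ,
    ((X.filter fun v => cshift^[d] v = v).card : ℂ) =
      ∑ v ∈ X, Complex.exp (2 * (Real.pi : ℂ) * Complex.I / n) ^ (d * stat v)

/-- The polynomial `w₁ + w₂ x + ⋯ + wₙ x^{n-1}` associated to a word `w ∈ F^n` under
the standard identification of `F^n` with `F[x]/(xⁿ-1)`.  A word `w` belongs to the
cyclic code generated by a monic divisor `g` of `xⁿ - 1` exactly when `g ∣ wordPoly w`. -/
noncomputable def wordPoly {F : Type*} [CommRing F] {n : ℕ} (w : Fin n → F) :
    Polynomial F :=
  ∑ i : Fin n, Polynomial.C (w i) * Polynomial.X ^ (i : ℕ)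

open Polynomial Finset
lemma wordPoly_coeff {F : Type*} [CommRing F] {n : ℕ} (w : Fin n → F) (i : Fin n) :
    (wordPoly w).coeff i = w i := by
  unfold wordPoly
  rw [Polynomial.finset_sum_coeff]
  rw [Finset.sum_eq_single i]
  · simp
  · intro b _ hb
    simp only [coeff_C_mul, coeff_X_pow]
    rw [if_neg, mul_zero]
    exact fun h => hb (Fin.ext h.symm)
  · simp

lemma wordPoly_degree_lt {F : Type*} [CommRing F] {n : ℕ} (w : Fin n → F) :
    (wordPoly w).degree < n := by
  unfold wordPoly
  refine lt_of_le_of_lt (Polynomial.degree_sum_le _ _) ?_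
  rw [Finset.sup_lt_iff (by exact_mod_cast WithBot.bot_lt_coe n)]
  intro i _
  refine lt_of_le_of_lt (Polynomial.degree_C_mul_X_pow_le _ _) ?_
  exact_mod_cast i.2

lemma mul_modByMonic_left {F : Type*} [Field F] (g S M : Polynomial F)
    (hgm : g.Monic) (hM : M.Monic) : (g * S) %ₘ (g * M) = g * (S %ₘ M) := by
  refine (Polynomial.div_modByMonic_unique (S /ₘ M) (g * (S %ₘ M)) (hgm.mul hM) ⟨?_, ?_⟩).2
  · have h := Polynomial.modByMonic_add_div S M
    linear_combination (g : Polynomial F) * h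
  · rcases eq_or_ne (S %ₘ M) 0 with h0 | h0
    · rw [h0, mul_zero, Polynomial.degree_zero, bot_lt_iff_ne_bot, Ne,
        Polynomial.degree_eq_bot]
      exact (hgm.mul hM).ne_zero
    · rw [Polynomial.degree_mul, Polynomial.degree_mul]
      refine WithBot.add_lt_add_left ?_ ?_
      · simp [Polynomial.degree_eq_bot, hgm.ne_zero]
      · exact Polynomial.degree_modByMonic_lt S hM

lemma rem_shift {F : Type*} [Field F] {n : ℕ} (hn : 0 < n) (P : Polynomial F)
    (hP : P.degree < n) :
    (X ^ (n - 1) * P) %ₘ (X ^ n - 1) = P.divX + C (P.coeff 0) * X ^ (n - 1) := by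
  obtain ⟨m, rfl⟩ : ∃ m, n = m + 1 := ⟨n - 1, (Nat.succ_pred_eq_of_pos hn).symm⟩
  have hmn : m + 1 - 1 = m := rfl
  rw [hmn]
  have hmonic : (X ^ (m + 1) - 1 : Polynomial F).Monic := by
    have := Polynomial.monic_X_pow_sub_C (1 : F) (Nat.succ_ne_zero m)
    simpa using this
  refine (Polynomial.div_modByMonic_unique P.divX _ hmonic ⟨?_, ?_⟩).2
  · have h := Polynomial.X_mul_divX_add P
    linear_combination (Polynomial.X : Polynomial F) ^ m * h
  · have hdeg : (X ^ (m + 1) - 1 : Polynomial F).degree = (m + 1 : ℕ) := by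
      have := Polynomial.degree_X_pow_sub_C (Nat.succ_pos m) (1 : F)
      simpa using this
    rw [hdeg]
    refine lt_of_le_of_lt (Polynomial.degree_add_le _ _) (max_lt ?_ ?_)
    · rcases eq_or_ne P 0 with h0 | h0
      · simp [h0]
      · exact lt_of_lt_of_le (Polynomial.degree_divX_lt h0) (le_of_lt hP)
    · refine lt_of_le_of_lt (Polynomial.degree_C_mul_X_pow_le _ _) ?_
      exact_mod_cast Nat.lt_succ_self m

lemma rem_shift_coeff {F : Type*} [Field F] {n : ℕ} (hn : 0 < n) (P : Polynomial F)
    (hP : P.degree < n) (j : ℕ) (hj : j < n) :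
    ((X ^ (n - 1) * P) %ₘ (X ^ n - 1)).coeff j = P.coeff ((j + 1) % n) := by
  rw [rem_shift hn P hP, Polynomial.coeff_add, Polynomial.coeff_divX, coeff_C_mul,
    coeff_X_pow]
  rcases eq_or_ne j (n - 1) with hj1 | hj1
  · have h1 : (j + 1) % n = 0 := by
      subst hj1
      rw [Nat.sub_add_cancel hn, Nat.mod_self]
    have h2 : P.coeff (j + 1) = 0 := by
      apply Polynomial.coeff_eq_zero_of_degree_lt
      refine lt_of_lt_of_le hP ?_
      have hle : n ≤ j + 1 := by omega
      exact_mod_cast hle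
    rw [h1, h2, if_pos hj1, mul_one, zero_add]
  · have h1 : (j + 1) % n = j + 1 := Nat.mod_eq_of_lt (by omega)
    rw [h1, if_neg hj1, mul_zero, add_zero]

lemma fiber_card {G H : Type*} [AddCommGroup G] [AddCommGroup H] [Fintype G] [Fintype H]
    [DecidableEq H] (f : G →+ H) (hf : Function.Surjective f) (h : H) :
    (Finset.univ.filter fun x => f x = h).card * Fintype.card H = Fintype.card G := by
  classical
  have key : ∀ h' : H, (Finset.univ.filter fun x => f x = h').card
      = (Finset.univ.filter fun x => f x = 0).card := by
    intro h'
    obtain ⟨g0, hg0⟩ := hf h'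
    refine Finset.card_nbij' (fun x => x - g0) (fun x => x + g0) ?_ ?_ ?_ ?_
    · intro a ha
      simp only [Finset.mem_coe, Finset.mem_filter, Finset.mem_univ, true_and] at ha ⊢
      simp [map_sub, ha, hg0]
    · intro a ha
      simp only [Finset.mem_coe, Finset.mem_filter, Finset.mem_univ, true_and] at ha ⊢
      simp [map_add, ha, hg0]
    · intro a _; simp
    · intro a _; simp
  have total : Fintype.card G
      = ∑ h' : H, (Finset.univ.filter fun x => f x = h').card := by
    rw [← Finset.card_univ]
    exact Finset.card_eq_sum_card_fiberwise (fun x _ => Finset.mem_univ (f x))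
  rw [key h]
  rw [total]
  rw [Finset.sum_congr rfl (fun h' _ => key h')]
  rw [Finset.sum_const, Finset.card_univ, smul_eq_mul, mul_comm]

/-- every nonzero codeword w of a dual Hamming code of dimension k ≥ 2
and length n = q^k - 1 satisfies 2·cdes(w) = (q-1)·q^{k-1}, for any fixed linear order
on F_q. -/
theorem stmt16 {F : Type*} [Field F] [Fintype F] [LinearOrder F] (k : ℕ) (hk : 2 ≤ k)
    (n : ℕ) (hn : n = Fintype.card F ^ k - 1)
    (gperp : Polynomial F) (hmonic : gperp.Monic) (hirr : Irreducible gperp)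
    (hdeg : gperp.natDegree = k)
    (hprim : orderOf (AdjoinRoot.root gperp) = n)
    (g : Polynomial F) (hg : g * gperp = Polynomial.X ^ n - 1) :
    ∀ w : Fin n → F, g ∣ wordPoly w → w ≠ 0 →
      2 * cdes w = (Fintype.card F - 1) * Fintype.card F ^ (k - 1) := by
  classical
  intro w hdvd hw0
  set q := Fintype.card F with hq
  have hq2 : 2 ≤ q := Fintype.one_lt_card
  have hkn : k ≤ n := by
    have h1 : k < 2 ^ k := Nat.lt_two_pow_self
    have h2 : 2 ^ k ≤ q ^ k := Nat.pow_le_pow_left hq2 k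
    omega
  have hqk4 : 4 ≤ q ^ k := by
    calc 4 = 2 ^ 2 := rfl
    _ ≤ q ^ 2 := Nat.pow_le_pow_left hq2 2
    _ ≤ q ^ k := Nat.pow_le_pow_right (by omega) hk
  have hn3 : 3 ≤ n := by omega
  have hn0 : 0 < n := by omega
  haveI : Fact (Irreducible gperp) := ⟨hirr⟩
  set α : AdjoinRoot gperp := AdjoinRoot.root gperp with hα
  haveI : Fintype (AdjoinRoot gperp) :=
    Module.fintypeOfFintype (AdjoinRoot.powerBasisAux' hmonic)
  have hcardK : Fintype.card (AdjoinRoot gperp) = q ^ k := by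
    rw [Module.card_fintype (AdjoinRoot.powerBasisAux' hmonic), Fintype.card_fin, hdeg]
  have hαn : α ^ n = 1 := by rw [← hprim]; exact pow_orderOf_eq_one α
  have hα0 : α ≠ 0 := by
    intro h
    rw [h, zero_pow (by omega : n ≠ 0)] at hαn
    exact zero_ne_one hαn
  -- facts about g
  have hXn : (Polynomial.X ^ n - 1 : Polynomial F).Monic := by
    have := Polynomial.monic_X_pow_sub_C (1 : F) (by omega : n ≠ 0)
    simpa using this
  have hgmonic : g.Monic := hmonic.of_mul_monic_left (by rw [mul_comm, hg]; exact hXn)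
  have hg0 : g ≠ 0 := hgmonic.ne_zero
  have hgp0 : gperp ≠ 0 := hmonic.ne_zero
  have hdegXn : (Polynomial.X ^ n - 1 : Polynomial F).natDegree = n := by
    have := Polynomial.natDegree_X_pow_sub_C (n := n) (r := (1 : F))
    simpa using this
  have hgdeg : g.natDegree = n - k := by
    have h1 := Polynomial.natDegree_mul hg0 hgp0
    rw [hg, hdegXn, hdeg] at h1
    omega
  have hgdeg' : g.degree = ((n - k : ℕ) : WithBot ℕ) := by
    rw [Polynomial.degree_eq_natDegree hg0, hgdeg]
  have hgpdeg : gperp.degree = ((k : ℕ) : WithBot ℕ) := by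
    rw [Polynomial.degree_eq_natDegree hgp0, hdeg]
  have hgc0 : g.coeff 0 ≠ 0 := by
    have h1 : g.coeff 0 * gperp.coeff 0 = (-1 : F) := by
      have h3 : ((Polynomial.X : Polynomial F) ^ n - 1).coeff 0 = -1 := by
        rw [Polynomial.coeff_sub, Polynomial.coeff_X_pow, Polynomial.coeff_one,
          if_neg (by omega : ¬ (0:ℕ) = n), if_pos rfl, zero_sub]
      rw [← Polynomial.mul_coeff_zero, hg, h3]
    intro h
    rw [h, zero_mul] at h1
    exact (by norm_num : (0 : F) ≠ -1) h1
  -- the linear functional L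
  set rep : AdjoinRoot gperp →ₗ[F] Polynomial F := AdjoinRoot.modByMonicHom hmonic with hrep
  set L : AdjoinRoot gperp →ₗ[F] F :=
    (Polynomial.lcoeff F 0).comp ((LinearMap.mulLeft F g).comp rep) with hL
  have hLdef : ∀ β : AdjoinRoot gperp, L β = (g * rep β).coeff 0 := fun β => rfl
  have hmkrep : ∀ β : AdjoinRoot gperp, AdjoinRoot.mk gperp (rep β) = β :=
    AdjoinRoot.mk_leftInverse hmonic
  have hrepdeg : ∀ β : AdjoinRoot gperp, (rep β).degree < gperp.degree := by
    intro β
    have h1 : rep β = (rep β) %ₘ gperp := by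
      conv_lhs => rw [← hmkrep β]
      rw [hrep]
      exact AdjoinRoot.modByMonicHom_mk hmonic _
    rw [h1]
    exact Polynomial.degree_modByMonic_lt _ hmonic
  -- the one-step shift
  have hstep : ∀ (β : AdjoinRoot gperp) (j : ℕ), j < n →
      (g * rep (α⁻¹ * β)).coeff j = (g * rep β).coeff ((j + 1) % n) := by
    intro β j hj
    have hinv : α⁻¹ = α ^ (n - 1) := by
      symm
      apply eq_inv_of_mul_eq_one_left
      rw [← pow_succ, Nat.sub_add_cancel hn0]
      exact hαn
    have hβ : α⁻¹ * β = AdjoinRoot.mk gperp (Polynomial.X ^ (n - 1) * rep β) := by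
      rw [map_mul, map_pow, AdjoinRoot.mk_X, hmkrep β, hinv, hα]
    have hrepeq : rep (α⁻¹ * β) = (Polynomial.X ^ (n - 1) * rep β) %ₘ gperp := by
      rw [hβ, hrep]
      exact AdjoinRoot.modByMonicHom_mk hmonic _
    have hP : (g * rep β).degree < (n : WithBot ℕ) := by
      rcases eq_or_ne (rep β) 0 with h0 | h0
      · rw [h0, mul_zero, Polynomial.degree_zero]
        exact_mod_cast WithBot.bot_lt_coe n
      · rw [Polynomial.degree_mul, hgdeg', Polynomial.degree_eq_natDegree h0]
        have h2 : (rep β).natDegree < k := by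
          have h3 := hrepdeg β
          rw [Polynomial.degree_eq_natDegree h0, hgpdeg] at h3
          exact_mod_cast h3
        exact_mod_cast (by omega : n - k + (rep β).natDegree < n)
    rw [hrepeq, ← mul_modByMonic_left g _ gperp hgmonic hmonic, hg, mul_left_comm]
    exact rem_shift_coeff hn0 _ hP j hj
  -- the iterated shift
  have hkey : ∀ (β : AdjoinRoot gperp) (m : ℕ) (j : ℕ), j < n →
      (g * rep ((α⁻¹) ^ m * β)).coeff j = (g * rep β).coeff ((j + m) % n) := by
    intro β m
    induction m with
    | zero =>
      intro j hj
      rw [pow_zero, one_mul, Nat.add_zero, Nat.mod_eq_of_lt hj]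
    | succ m ih =>
      intro j hj
      have h1 : (α⁻¹) ^ (m + 1) * β = α⁻¹ * ((α⁻¹) ^ m * β) := by
        rw [pow_succ]; ring
      rw [h1, hstep _ j hj, ih _ (Nat.mod_lt _ hn0), Nat.mod_add_mod]
      have h2 : j + 1 + m = j + (m + 1) := by omega
      rw [h2]
  -- decompose the codeword
  obtain ⟨h, hWh⟩ := hdvd
  have hW0 : wordPoly w ≠ 0 := by
    intro hz
    apply hw0
    funext i
    have h1 := wordPoly_coeff w i
    rw [hz] at h1
    simpa using h1.symm
  have hh0 : h ≠ 0 := by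
    rintro rfl
    rw [mul_zero] at hWh
    exact hW0 hWh
  have hWdeg : (wordPoly w).natDegree < n := by
    have h1 := wordPoly_degree_lt w
    rwa [Polynomial.degree_eq_natDegree hW0, Nat.cast_lt] at h1
  have hhdeg : h.natDegree < k := by
    have h1 := Polynomial.natDegree_mul hg0 hh0
    rw [← hWh, hgdeg] at h1
    omega
  have hhdeg' : h.degree < gperp.degree := by
    rw [Polynomial.degree_eq_natDegree hh0, hgpdeg]
    exact_mod_cast hhdeg
  set c : AdjoinRoot gperp := AdjoinRoot.mk gperp h with hc
  have hc0 : c ≠ 0 := by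
    intro hz
    rw [hc, AdjoinRoot.mk_eq_zero] at hz
    have h1 := Polynomial.degree_le_of_dvd hz hh0
    exact absurd h1 (not_le_of_gt hhdeg')
  have hrepc : rep c = h := by
    rw [hc, hrep, AdjoinRoot.modByMonicHom_mk hmonic,
      (Polynomial.modByMonic_eq_self_iff hmonic).2 hhdeg']
  have hwcoeff : ∀ (m : ℕ) (hm : m < n), (g * h).coeff m = w ⟨m, hm⟩ := by
    intro m hm
    rw [← hWh]
    exact wordPoly_coeff w ⟨m, hm⟩
  have hwL : ∀ (m : ℕ) (hm : m < n), L ((α⁻¹) ^ m * c) = w ⟨m, hm⟩ := by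
    intro m hm
    rw [hLdef, hkey c m 0 hn0, hrepc, Nat.zero_add, Nat.mod_eq_of_lt hm, hwcoeff m hm]
  have hwL' : ∀ (m : ℕ), L (α⁻¹ * ((α⁻¹) ^ m * c))
      = w ⟨(m + 1) % n, Nat.mod_lt _ hn0⟩ := by
    intro m
    rw [← mul_assoc, ← pow_succ']
    have h3 : (α⁻¹) ^ (m + 1) = (α⁻¹) ^ ((m + 1) % n) := by
      rw [inv_pow, inv_pow]
      congr 1
      rw [← hprim]
      exact (pow_mod_orderOf _ _).symm
    rw [h3]
    exact hwL _ (Nat.mod_lt _ hn0)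
  -- covering all nonzero elements
  set αu : (AdjoinRoot gperp)ˣ := Units.mk0 α hα0 with hαu
  have hoαu : orderOf αu = n := by
    rw [← orderOf_units]
    exact hprim
  have hcover : ∀ (c' : AdjoinRoot gperp), c' ≠ 0 → ∀ β : AdjoinRoot gperp, β ≠ 0 →
      ∃ m : ℕ, m < n ∧ (α⁻¹) ^ m * c' = β := by
    intro c' hc' β hβ
    have htop : Subgroup.zpowers αu = ⊤ := by
      apply Subgroup.eq_top_of_card_eq
      rw [Nat.card_zpowers, hoαu, Nat.card_eq_fintype_card, Fintype.card_units, hcardK, hn]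
    have hmem : (Units.mk0 β hβ) * (Units.mk0 c' hc')⁻¹ ∈ Subgroup.zpowers αu := by
      rw [htop]; exact Subgroup.mem_top _
    rw [← mem_powers_iff_mem_zpowers] at hmem
    obtain ⟨m, hm⟩ := hmem
    have hv : α ^ m = β * c'⁻¹ := by
      have h1 := congrArg Units.val hm
      simpa [hαu] using h1
    have hmodv : α ^ (m % n) = α ^ m := by
      rw [← hprim]
      exact pow_mod_orderOf α m
    have hr : m % n < n := Nat.mod_lt _ hn0
    rcases Nat.eq_zero_or_pos (m % n) with h0 | h0
    · refine ⟨0, hn0, ?_⟩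
      rw [pow_zero, one_mul]
      have h1 : (1 : AdjoinRoot gperp) = β * c'⁻¹ := by
        rw [← hv, ← hmodv, h0, pow_zero]
      field_simp at h1
      exact h1
    · refine ⟨n - m % n, by omega, ?_⟩
      have h2 : α ^ (n - m % n) * α ^ (m % n) = 1 := by
        rw [← pow_add, Nat.sub_add_cancel (le_of_lt hr)]
        exact hαn
      have h3 : (α ^ (n - m % n))⁻¹ = α ^ (m % n) := inv_eq_of_mul_eq_one_right h2
      rw [inv_pow, h3, hmodv, hv]
      field_simp
  -- rewriting cdes as a count over the field
  have hcdes : cdes w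
      = (Finset.univ.filter fun β : AdjoinRoot gperp => L (α⁻¹ * β) < L β).card := by
    unfold cdes
    refine Finset.card_nbij (fun i : Fin n => (α⁻¹) ^ (i : ℕ) * c) ?_ ?_ ?_
    · intro i hi
      rw [Finset.mem_coe, Finset.mem_filter] at hi ⊢
      refine ⟨Finset.mem_univ _, ?_⟩
      have h1 : L ((α⁻¹) ^ (i : ℕ) * c) = w i := by
        have h2 := hwL i i.2
        simpa using h2
      rw [h1, hwL' (i : ℕ)]
      exact hi.2
    · intro a ha b hb hab
      have h1 : (α⁻¹) ^ (a : ℕ) = (α⁻¹) ^ (b : ℕ) := mul_right_cancel₀ hc0 hab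
      have h2 : αu ^ (a : ℕ) = αu ^ (b : ℕ) := by
        have h3 := congrArg (·⁻¹) h1
        simp only [← inv_pow, inv_inv] at h3
        exact Units.ext (by simpa [hαu] using h3)
      have h4 : (a : ℕ) = (b : ℕ) := by
        refine pow_injOn_Iio_orderOf ?_ ?_ h2
        · rw [Set.mem_Iio, hoαu]; exact a.2
        · rw [Set.mem_Iio, hoαu]; exact b.2
      exact Fin.ext h4
    · intro β hβ
      have hβ' : L (α⁻¹ * β) < L β := by
        have h1 := hβ
        rw [Finset.mem_coe, Finset.mem_filter] at h1
        exact h1.2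
      have hβ0 : β ≠ 0 := by
        intro hz
        rw [hz, mul_zero, map_zero] at hβ'
        exact lt_irrefl _ hβ'
      obtain ⟨m, hm, hme⟩ := hcover c hc0 β hβ0
      refine ⟨⟨m, hm⟩, ?_, hme⟩
      rw [Finset.mem_coe, Finset.mem_filter]
      refine ⟨Finset.mem_univ _, ?_⟩
      have h1 : w ⟨m, hm⟩ = L β := by rw [← hme]; exact (hwL m hm).symm
      have h2 : w ⟨(m + 1) % n, Nat.mod_lt _ hn0⟩ = L (α⁻¹ * β) := by
        rw [← hme]
        exact (hwL' m).symm
      show w ⟨(m + 1) % n, Nat.mod_lt _ hn0⟩ < w ⟨m, hm⟩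
      rw [h1, h2]
      exact hβ'
  -- L is not identically zero
  have hL1 : L 1 = g.coeff 0 := by
    have hrep1 : rep (1 : AdjoinRoot gperp) = 1 := by
      rw [show (1 : AdjoinRoot gperp) = AdjoinRoot.mk gperp 1 from (map_one _).symm,
        hrep, AdjoinRoot.modByMonicHom_mk hmonic]
      apply (Polynomial.modByMonic_eq_self_iff hmonic).2
      rw [Polynomial.degree_one, hgpdeg]
      exact_mod_cast (by omega : 0 < k)
    rw [hLdef, hrep1, mul_one]
  have hLne : L 1 ≠ 0 := by rw [hL1]; exact hgc0
  -- existence of ν with L ν = 0 but L (α⁻¹ ν) ≠ 0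
  have hν : ∃ ν : AdjoinRoot gperp, L ν = 0 ∧ L (α⁻¹ * ν) ≠ 0 := by
    by_contra hcon
    push_neg at hcon
    have hker : ∀ ν : AdjoinRoot gperp, L ν = 0 → L (α⁻¹ * ν) = 0 := fun ν h0 => hcon ν h0
    have hν0 : ∃ ν : AdjoinRoot gperp, ν ≠ 0 ∧ L ν = 0 := by
      by_contra hcon2
      push_neg at hcon2
      have hinj : Function.Injective L := by
        intro a b hab
        by_contra hne
        have h1 : a - b ≠ 0 := sub_ne_zero_of_ne hne
        have h2 : L (a - b) = 0 := by rw [map_sub, hab, sub_self]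
        exact hcon2 _ h1 h2
      have hle : Fintype.card (AdjoinRoot gperp) ≤ Fintype.card F :=
        Fintype.card_le_of_injective L hinj
      rw [hcardK, ← hq] at hle
      have h1 : q < q ^ k := by
        calc q = q ^ 1 := (pow_one q).symm
        _ < q ^ k := Nat.pow_lt_pow_right (by omega) (by omega)
      omega
    obtain ⟨ν₀, hν₀0, hν₀⟩ := hν0
    have hall : ∀ m : ℕ, L ((α⁻¹) ^ m * ν₀) = 0 := by
      intro m
      induction m with
      | zero => simpa using hν₀
      | succ m ih =>
        have h1 : (α⁻¹) ^ (m + 1) * ν₀ = α⁻¹ * ((α⁻¹) ^ m * ν₀) := by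
          rw [pow_succ]; ring
        rw [h1]
        exact hker _ ih
    have h1 : L 1 = 0 := by
      obtain ⟨m, _, hme⟩ := hcover ν₀ hν₀0 1 one_ne_zero
      rw [← hme]
      exact hall m
    exact hLne h1
  obtain ⟨ν, hνL, hνL'⟩ := hν
  -- surjectivity of the pair map
  set Mf : AdjoinRoot gperp →ₗ[F] F × F :=
    LinearMap.prod L (L.comp (LinearMap.mulLeft F α⁻¹)) with hMf
  have hMf1 : ∀ β, (Mf β).1 = L β := fun β => rfl
  have hMf2 : ∀ β, (Mf β).2 = L (α⁻¹ * β) := fun β => rfl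
  have hMsurj : Function.Surjective Mf := by
    rintro ⟨a, b⟩
    set u := L 1 with hu
    set v := L (α⁻¹ * 1) with hv
    set e0 := L (α⁻¹ * ν) with he0
    refine ⟨(a * u⁻¹) • (1 : AdjoinRoot gperp) + ((b - a * u⁻¹ * v) * e0⁻¹) • ν, ?_⟩
    have h1 : L ((a * u⁻¹) • (1 : AdjoinRoot gperp) + ((b - a * u⁻¹ * v) * e0⁻¹) • ν)
        = a := by
      rw [map_add, map_smul, map_smul, hνL, smul_eq_mul, smul_eq_mul, mul_zero, add_zero,
        ← hu]
      field_simp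
    have h2 : L (α⁻¹ * ((a * u⁻¹) • (1 : AdjoinRoot gperp)
        + ((b - a * u⁻¹ * v) * e0⁻¹) • ν)) = b := by
      rw [mul_add, mul_smul_comm, mul_smul_comm, map_add, map_smul, map_smul, ← hv, ← he0,
        smul_eq_mul, smul_eq_mul]
      have hu0 : u ≠ 0 := hLne
      have he00 : e0 ≠ 0 := hνL'
      field_simp
      ring
    have h3 : Mf ((a * u⁻¹) • (1 : AdjoinRoot gperp) + ((b - a * u⁻¹ * v) * e0⁻¹) • ν)
        = (L ((a * u⁻¹) • (1 : AdjoinRoot gperp) + ((b - a * u⁻¹ * v) * e0⁻¹) • ν),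
           L (α⁻¹ * ((a * u⁻¹) • (1 : AdjoinRoot gperp)
             + ((b - a * u⁻¹ * v) * e0⁻¹) • ν))) := rfl
    rw [h3, h1, h2]
  -- fiberwise counting
  set T : Finset (F × F) := Finset.univ.filter (fun p : F × F => p.2 < p.1) with hT
  have hpart : (Finset.univ.filter fun β : AdjoinRoot gperp => L (α⁻¹ * β) < L β).card
      = ∑ p ∈ T, (Finset.univ.filter fun β : AdjoinRoot gperp => Mf β = p).card := by
    rw [Finset.card_eq_sum_card_fiberwise
      (f := fun β => Mf β) (t := T)
      (fun β hβ => by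
        rw [Finset.mem_coe, Finset.mem_filter] at hβ
        rw [hT, Finset.mem_coe, Finset.mem_filter]
        exact ⟨Finset.mem_univ _, hβ.2⟩)]
    refine Finset.sum_congr rfl ?_
    intro p hp
    congr 1
    ext β
    simp only [Finset.mem_filter, Finset.mem_univ, true_and]
    constructor
    · rintro ⟨_, h⟩; exact h
    · intro hMβ
      refine ⟨?_, hMβ⟩
      rw [hT, Finset.mem_filter] at hp
      have h4 : (Mf β).2 < (Mf β).1 := by rw [hMβ]; exact hp.2
      exact h4
  have hfib : ∀ p : F × F,
      (Finset.univ.filter fun β : AdjoinRoot gperp => Mf β = p).card * (q * q) = q ^ k := by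
    intro p
    have h1 := fiber_card Mf.toAddMonoidHom hMsurj p
    rw [Fintype.card_prod, hcardK, ← hq] at h1
    convert h1 <;> rfl
  have hcount : cdes w * (q * q) = T.card * q ^ k := by
    rw [hcdes, hpart, Finset.sum_mul, Finset.sum_congr rfl (fun p _ => hfib p),
      Finset.sum_const, smul_eq_mul]
  -- counting pairs
  have hswap : (Finset.univ.filter fun p : F × F => p.1 < p.2).card = T.card := by
    refine Finset.card_nbij (fun p => p.swap) ?_ ?_ ?_
    · intro p hp
      rw [Finset.mem_coe, Finset.mem_filter] at hp
      rw [hT, Finset.mem_coe, Finset.mem_filter]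
      exact ⟨Finset.mem_univ _, hp.2⟩
    · intro p _ p' _ hpp
      exact Prod.swap_injective hpp
    · intro p hp
      rw [Finset.mem_coe, hT, Finset.mem_filter] at hp
      refine ⟨p.swap, ?_, Prod.swap_swap p⟩
      rw [Finset.mem_coe, Finset.mem_filter]
      exact ⟨Finset.mem_univ _, hp.2⟩
  have hdiag : (Finset.univ.filter fun p : F × F => p.1 = p.2).card = q := by
    rw [hq]
    rw [← Finset.card_univ]
    refine Finset.card_nbij' (fun p => p.1) (fun a => (a, a)) ?_ ?_ ?_ ?_
    · intro p _; exact Finset.mem_univ _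
    · intro a _
      rw [Finset.mem_coe, Finset.mem_filter]
      exact ⟨Finset.mem_univ _, rfl⟩
    · intro p hp
      rw [Finset.mem_coe, Finset.mem_filter] at hp
      exact Prod.ext rfl hp.2
    · intro a _; rfl
  have hsplit : T.card + ((Finset.univ.filter fun p : F × F => p.1 < p.2).card
      + (Finset.univ.filter fun p : F × F => p.1 = p.2).card) = q * q := by
    have h1 := Finset.card_filter_add_card_filter_not
      (s := (Finset.univ : Finset (F × F))) (p := fun p : F × F => p.2 < p.1)
    have h2 : (Finset.univ.filter fun p : F × F => ¬ p.2 < p.1).card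
        = (Finset.univ.filter fun p : F × F => p.1 < p.2).card
          + (Finset.univ.filter fun p : F × F => p.1 = p.2).card := by
      rw [← Finset.card_union_of_disjoint (by
        rw [Finset.disjoint_left]
        intro p hp1 hp2
        rw [Finset.mem_filter] at hp1 hp2
        exact absurd hp2.2 (ne_of_lt hp1.2))]
      congr 1
      ext p
      simp only [Finset.mem_union, Finset.mem_filter, Finset.mem_univ, true_and, not_lt]
      constructor
      · intro hle
        rcases lt_or_eq_of_le hle with h | h
        · exact Or.inl h
        · exact Or.inr h
      · rintro (h | h)
        · exact le_of_lt h
        · exact le_of_eq h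
    have h3 : (Finset.univ : Finset (F × F)).card = q * q := by
      rw [Finset.card_univ, Fintype.card_prod, ← hq]
    rw [h2] at h1
    rw [← hT] at h1
    rw [h3] at h1
    exact h1
  have hTcard : 2 * T.card = q * q - q := by
    rw [hswap, hdiag] at hsplit
    omega
  -- final arithmetic
  have hQQ : 0 < q * q := Nat.mul_pos (by omega) (by omega)
  apply Nat.eq_of_mul_eq_mul_right hQQ
  calc (2 * cdes w) * (q * q) = 2 * (cdes w * (q * q)) := by ring
  _ = 2 * (T.card * q ^ k) := by rw [hcount]
  _ = (2 * T.card) * q ^ k := by ring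
  _ = (q * q - q) * q ^ k := by rw [hTcard]
  _ = ((q - 1) * q) * q ^ k := by
      have h4 : q * q - q = (q - 1) * q := by rw [Nat.sub_mul, one_mul]
      rw [h4]
  _ = (q - 1) * q ^ (k - 1) * (q * q) := by
      have h2 : q ^ k = q ^ (k - 1) * q := by
        rw [← pow_succ]
        congr 1
        omega
      rw [h2]
      ring
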